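/- Let S be a finite set with |S| = n and let k ≤ ⌊n/2⌋. Then there exists a bijection ξ from the (n−k)-subsets of S to the k-subsets of S such that ξ(A) ⊆ A for every (n−k)-subset A. -/

import Mathlib

private lemma count_supersets {α : Type*} [DecidableEq α] (S B : Finset α) (hB : B ⊆ S)
    (j : ℕ) (hj : B.card ≤ j) :
    ((S.powersetCard j).filter (fun A => B ⊆ A)).card
      = (S.card - B.card).choose (j - B.card) := by
  rw [← Finset.card_sdiff_of_subset hB, ← Finset.card_powersetCard]
  apply Finset.card_bij (fun A _ => A \ B)
  · intro A hA
    simp only [Finset.mem_filter, Finset.mem_powersetCard] at hA ⊢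
    obtain ⟨⟨hAS, hAc⟩, hBA⟩ := hA
    exact ⟨Finset.sdiff_subset_sdiff hAS le_rfl, by rw [Finset.card_sdiff_of_subset hBA, hAc]⟩
  · intro A₁ h₁ A₂ h₂ h
    simp only [Finset.mem_filter, Finset.mem_powersetCard] at h₁ h₂
    rw [← Finset.sdiff_union_of_subset h₁.2, ← Finset.sdiff_union_of_subset h₂.2, h]
  · intro C hC
    simp only [Finset.mem_powersetCard] at hC
    refine ⟨C ∪ B, ?_, ?_⟩
    · simp only [Finset.mem_filter, Finset.mem_powersetCard]
      have hdisj : Disjoint C B := Finset.disjoint_of_subset_left hC.1 Finset.sdiff_disjoint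
      refine ⟨⟨Finset.union_subset (hC.1.trans Finset.sdiff_subset) hB, ?_⟩,
        Finset.subset_union_right⟩
      rw [Finset.card_union_of_disjoint hdisj, hC.2]
      omega
    · rw [Finset.union_sdiff_right, Finset.sdiff_eq_self_of_disjoint]
      exact Finset.disjoint_of_subset_left hC.1 Finset.sdiff_disjoint

/-- For a finite set `S` with `|S| = n` and `k ≤ ⌊n/2⌋`, there is a bijection
`ξ` from the `(n-k)`-subsets of `S` to the `k`-subsets of `S` such that
`ξ A ⊆ A` for every `(n-k)`-subset `A`. -/
theorem bijective_sampling_complement {α : Type*} [DecidableEq α]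
    (S : Finset α) (n k : ℕ) (hS : S.card = n) (hk : k ≤ n / 2) :
    ∃ ξ : {A // A ∈ S.powersetCard (n - k)} ≃ {B // B ∈ S.powersetCard k},
      ∀ A : {A // A ∈ S.powersetCard (n - k)}, (ξ A : Finset α) ⊆ (A : Finset α) := by
  classical
  have hkn : k ≤ n := le_trans hk (Nat.div_le_self n 2)
  have hknk : k ≤ n - k := by omega
  let ι := {A // A ∈ S.powersetCard (n - k)}
  show ∃ ξ : ι ≃ _, _
  set t : ι → Finset (Finset α) := fun A => (A : Finset α).powersetCard k with ht
  have hcardA : ∀ A : ι, (A : Finset α).card = n - k := fun A =>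
    (Finset.mem_powersetCard.1 A.2).2
  have hsubA : ∀ A : ι, (A : Finset α) ⊆ S := fun A =>
    (Finset.mem_powersetCard.1 A.2).1
  set m := (n - k).choose k with hm
  have hmpos : 0 < m := Nat.choose_pos hknk
  -- Hall's condition
  have hall : ∀ s : Finset ι, s.card ≤ (s.biUnion t).card := by
    intro s
    have key := Finset.card_mul_le_card_mul (fun (A : ι) (B : Finset α) => B ⊆ (A : Finset α))
      (s := s) (t := s.biUnion t) (m := m) (n := m) ?_ ?_
    · exact Nat.le_of_mul_le_mul_right (by linarith [key]) hmpos
    · intro A hA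
      have hsub : (A : Finset α).powersetCard k ⊆
          (s.biUnion t).bipartiteAbove (fun A B => B ⊆ (A : Finset α)) A := by
        intro B hB
        simp only [Finset.bipartiteAbove, Finset.mem_filter, Finset.mem_biUnion]
        exact ⟨⟨A, hA, hB⟩, (Finset.mem_powersetCard.1 hB).1⟩
      calc m = ((A : Finset α).powersetCard k).card := by
              rw [Finset.card_powersetCard, hcardA A]
        _ ≤ _ := Finset.card_le_card hsub
    · intro B hB
      simp only [Finset.mem_biUnion] at hB
      obtain ⟨A₀, _, hBA₀⟩ := hB
      have hBk : B.card = k := (Finset.mem_powersetCard.1 hBA₀).2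
      have hBS : B ⊆ S := (Finset.mem_powersetCard.1 hBA₀).1.trans (hsubA A₀)
      have hinj : (s.bipartiteBelow (fun (A : ι) (B : Finset α) => B ⊆ A.1) B).card ≤
          ((S.powersetCard (n - k)).filter (fun A => B ⊆ A)).card := by
        apply Finset.card_le_card_of_injOn (fun (A : ι) => A.1)
        · intro A hA
          simp only [Finset.bipartiteBelow, Finset.mem_filter] at hA ⊢
          exact Finset.mem_filter.2 ⟨A.2, (Finset.mem_filter.1 hA).2⟩
        · intro A₁ _ A₂ _ h
          exact Subtype.ext h
      refine hinj.trans ?_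
      rw [count_supersets S B hBS (n - k) (by omega), hS, hBk, hm]
      rw [Nat.choose_symm hknk]
  obtain ⟨f, hfinj, hft⟩ := (Finset.all_card_le_biUnion_card_iff_exists_injective t).1 hall
  have hfmem : ∀ A : ι, f A ∈ S.powersetCard k := by
    intro A
    have := hft A
    rw [ht] at this
    simp only [Finset.mem_powersetCard] at this ⊢
    exact ⟨this.1.trans (hsubA A), this.2⟩
  set g : ι → {B // B ∈ S.powersetCard k} := fun A => ⟨f A, hfmem A⟩ with hg
  have hginj : Function.Injective g := fun A₁ A₂ h =>
    hfinj (congrArg Subtype.val h)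
  have hcard : Fintype.card ι = Fintype.card {B // B ∈ S.powersetCard k} := by
    rw [Fintype.card_coe, Fintype.card_coe, Finset.card_powersetCard,
      Finset.card_powersetCard, hS, Nat.choose_symm hkn]
  have hgbij : Function.Bijective g :=
    (Fintype.bijective_iff_injective_and_card g).2 ⟨hginj, hcard⟩
  refine ⟨Equiv.ofBijective g hgbij, fun A => ?_⟩
  exact (Finset.mem_powersetCard.1 (hft A)).1
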